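/- Let Δ be the root system of sl_n realized in the diagonal Cartan subalgebra h, let f be a nilpotent element with partition m₁ ≥ ... ≥ m_s of n, largest part m = m₁, realized in Jordan form so that h^f ⊂ h. If Φ ⊂ Δ is a root subsystem with Φ ∩ Δ^f = ∅ (where Δ^f = {α ∈ Δ : α|_{h^f} = 0}), then rank Φ ≤ n - m. -/
import Mathlib


/-- Proposition 3.3(a) (rank bound) of Kac–Wakimoto, in the combinatorial model of
`sl_n`: roots are `ε_i - ε_j` (realized as `Pi.single i 1 - Pi.single j 1` in `Fin n → ℚ`),
the nilpotent `f` corresponds to a partition of `n` recorded by the block (row) assignment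
`b : Fin n → Fin s` whose largest block has size `m`, and `Δ^f` consists of the roots
`ε_i - ε_j` with `b i = b j` (those vanishing on `h^f`).  If `Φ ⊆ Δ \ Δ^f` is a root
subsystem, then `rank Φ ≤ n - m`. -/
theorem stmt6 (n s : ℕ) (hn : 0 < n) (b : Fin n → Fin s)
    (m : ℕ)
    (hm : ∀ k : Fin s, (Finset.univ.filter fun i => b i = k).card ≤ m)
    (hmax : ∃ k : Fin s, (Finset.univ.filter fun i => b i = k).card = m)
    (Φ : Set (Fin n → ℚ))
    (hΦ : Φ ⊆ {v | ∃ i j : Fin n, i ≠ j ∧ v = Pi.single i 1 - Pi.single j 1})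
    (hneg : ∀ v ∈ Φ, -v ∈ Φ)
    (hadd : ∀ v w : Fin n → ℚ, v ∈ Φ → w ∈ Φ →
      (v + w) ∈ {v | ∃ i j : Fin n, i ≠ j ∧ v = Pi.single i 1 - Pi.single j 1} → v + w ∈ Φ)
    (hdisj : Φ ∩ {v | ∃ i j : Fin n, i ≠ j ∧ b i = b j ∧
      v = Pi.single i 1 - Pi.single j 1} = ∅) :
    Module.finrank ℚ (Submodule.span ℚ Φ) ≤ n - m := by
  classical
  -- the "same class" relation
  set R : Fin n → Fin n → Prop :=
    fun i j => i = j ∨ (Pi.single i 1 - Pi.single j 1 : Fin n → ℚ) ∈ Φ with hRdef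
  have hsym : ∀ {i j : Fin n}, R i j → R j i := by
    rintro i j (rfl | h)
    · exact Or.inl rfl
    · right
      have := hneg _ h
      rwa [neg_sub] at this
  have htrans : ∀ {i j k : Fin n}, R i j → R j k → R i k := by
    rintro i j k (rfl | hij) h2
    · exact h2
    rcases h2 with rfl | hjk
    · exact Or.inr hij
    by_cases hik : i = k
    · exact Or.inl hik
    · right
      have := hadd _ _ hij hjk ⟨i, k, hik, sub_add_sub_cancel _ _ _⟩
      rwa [sub_add_sub_cancel] at this
  have hdisj' : ∀ i j : Fin n, i ≠ j → b i = b j →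
      (Pi.single i 1 - Pi.single j 1 : Fin n → ℚ) ∉ Φ := by
    intro i j hij hb h
    have : (Pi.single i 1 - Pi.single j 1 : Fin n → ℚ) ∈
        Φ ∩ {v | ∃ i j : Fin n, i ≠ j ∧ b i = b j ∧
          v = Pi.single i 1 - Pi.single j 1} := ⟨h, i, j, hij, hb, rfl⟩
    rw [hdisj] at this
    exact this
  obtain ⟨k, hk⟩ := hmax
  set B : Finset (Fin n) := Finset.univ.filter (fun i => b i = k) with hBdef
  -- the linear map summing coordinates over each equivalence class
  let L : (Fin n → ℚ) →ₗ[ℚ] (B → ℚ) :=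
    { toFun := fun v x => ∑ i ∈ Finset.univ.filter (fun i => R (x : Fin n) i), v i
      map_add' := by
        intro v w
        funext x
        simp [Finset.sum_add_distrib]
      map_smul' := by
        intro c v
        funext x
        simp [Finset.mul_sum] }
  have hLsingle : ∀ (x i : Fin n),
      (∑ p ∈ Finset.univ.filter (fun p => R x p), (Pi.single i 1 : Fin n → ℚ) p)
        = if R x i then 1 else 0 := by
    intro x i
    simp only [Pi.single_apply]
    rw [Finset.sum_ite_eq']
    simp
  have hker : ∀ v ∈ Φ, L v = 0 := by
    intro v hv
    obtain ⟨i, j, hij, rfl⟩ := hΦ hv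
    have hRij : R i j := Or.inr hv
    funext x
    show (∑ p ∈ Finset.univ.filter (fun p => R (x : Fin n) p),
        ((Pi.single i 1 : Fin n → ℚ) p - (Pi.single j 1 : Fin n → ℚ) p)) = 0
    rw [Finset.sum_sub_distrib, hLsingle, hLsingle]
    have hiff : R (x : Fin n) i ↔ R (x : Fin n) j :=
      ⟨fun h => htrans h hRij, fun h => htrans h (hsym hRij)⟩
    by_cases h : R (x : Fin n) i
    · rw [if_pos h, if_pos (hiff.mp h), sub_self]
    · rw [if_neg h, if_neg (fun h' => h (hiff.mpr h')), sub_self]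
  have hRB : ∀ x y : B, R (x : Fin n) (y : Fin n) ↔ x = y := by
    intro x y
    constructor
    · intro h
      by_contra hxy
      have hxy' : (x : Fin n) ≠ (y : Fin n) := fun e => hxy (Subtype.ext e)
      rcases h with e | h
      · exact hxy' e
      · have hbx : b x = k := (Finset.mem_filter.mp x.2).2
        have hby : b y = k := (Finset.mem_filter.mp y.2).2
        exact hdisj' _ _ hxy' (hbx.trans hby.symm) h
    · rintro rfl
      exact Or.inl rfl
  have hLbasis : ∀ x : B, L (Pi.single (x : Fin n) 1) = Pi.single x (1 : ℚ) := by
    intro x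
    funext y
    show (∑ p ∈ Finset.univ.filter (fun p => R (y : Fin n) p),
        (Pi.single (x : Fin n) 1 : Fin n → ℚ) p) = _
    rw [hLsingle, Pi.single_apply]
    by_cases h : y = x
    · rw [if_pos ((hRB y x).mpr h), if_pos h]
    · rw [if_neg (fun h' => h ((hRB y x).mp h')), if_neg h]
  have hsurj : Function.Surjective L := by
    intro w
    refine ⟨∑ x : B, w x • (Pi.single (x : Fin n) 1 : Fin n → ℚ), ?_⟩
    rw [map_sum]
    simp only [map_smul, hLbasis]
    funext y
    simp [Pi.single_apply, mul_ite, Finset.sum_ite_eq]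
  have h1 := LinearMap.finrank_range_add_finrank_ker L
  have hr : Module.finrank ℚ (LinearMap.range L) = m := by
    rw [LinearMap.range_eq_top.mpr hsurj, finrank_top]
    rw [Module.finrank_pi ℚ]
    rw [Fintype.card_coe]
    exact hk
  have hd : Module.finrank ℚ (Fin n → ℚ) = n := by simp
  rw [hr, hd] at h1
  have hspan : Submodule.span ℚ Φ ≤ LinearMap.ker L :=
    Submodule.span_le.mpr (fun v hv => hker v hv)
  have hmono := Submodule.finrank_mono hspan
  omega
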